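/- Let n ≥ 2 and φ : ℝⁿ∖{0} → ℝⁿ, φ(x) = x/|x|². Then the componentwise Euclidean bilaplacian of φ satisfies Δ²φ(x) = 8(n−2)(n−4)·x/|x|⁶ for all x ≠ 0. Consequently, for n ≥ 3, the inversion φ is a biharmonic map (i.e. Δ²φ ≡ 0 on ℝⁿ∖{0}) if and only if n = 4. -/

import Mathlib

noncomputable section

abbrev E (n : ℕ) := EuclideanSpace ℝ (Fin n)

/-- Partial derivative in the `i`-th coordinate direction. -/
def pd {m : ℕ} (u : E m → ℝ) (i : Fin m) : E m → ℝ :=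
  fun x => fderiv ℝ u x (EuclideanSpace.single i 1)

/-- Euclidean Laplacian `Δu = Σᵢ ∂²u/∂xᵢ²`. -/
def lap {m : ℕ} (u : E m → ℝ) : E m → ℝ :=
  fun x => ∑ i, pd (pd u i) i x

section Aux

variable {n : ℕ}

lemma hasFDerivAt_normSq (y : E n) :
    HasFDerivAt (fun y : E n => ‖y‖ ^ 2) (2 • (innerSL ℝ y)) y := by
  simpa using (hasFDerivAt_id y).norm_sq

lemma normSq_ne_zero {y : E n} (hy : y ≠ 0) : ‖y‖ ^ 2 ≠ 0 := by
  have : ‖y‖ ≠ 0 := norm_ne_zero_iff.mpr hy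
  positivity

lemma hasFDerivAt_ck (k : ℕ) (hk : 1 ≤ k) {x : E n} (hx : x ≠ 0) :
    HasFDerivAt (fun y : E n => ((‖y‖ ^ 2)⁻¹) ^ k)
      ((-(2 * (k : ℝ)) * ((‖x‖ ^ 2)⁻¹) ^ (k + 1)) • innerSL ℝ x) x := by
  have hN0 := normSq_ne_zero hx
  have h1 : HasDerivAt (fun t : ℝ => (t⁻¹) ^ k)
      ((k : ℝ) * ((‖x‖ ^ 2)⁻¹) ^ (k - 1) * (-((‖x‖ ^ 2) ^ 2)⁻¹)) (‖x‖ ^ 2) :=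
    (hasDerivAt_inv hN0).pow k
  have h2 := h1.comp_hasFDerivAt x (hasFDerivAt_normSq x)
  refine h2.congr_fderiv ?_
  ext v
  simp only [ContinuousLinearMap.smul_apply, ContinuousLinearMap.coe_smul', Pi.smul_apply,
    smul_eq_mul]
  have hsplit : ((‖x‖ ^ 2)⁻¹) ^ (k + 1) = ((‖x‖ ^ 2)⁻¹) ^ (k - 1) * ((‖x‖ ^ 2)⁻¹) ^ 2 := by
    rw [← pow_add]; congr 1; omega
  rw [hsplit, inv_pow]
  ring

lemma hasFDerivAt_h (k : ℕ) (hk : 1 ≤ k) (α : Fin n) {x : E n} (hx : x ≠ 0) :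
    HasFDerivAt (fun y : E n => y α * ((‖y‖ ^ 2)⁻¹) ^ k)
      (x α • ((-(2 * (k : ℝ)) * ((‖x‖ ^ 2)⁻¹) ^ (k + 1)) • innerSL ℝ x)
        + (((‖x‖ ^ 2)⁻¹) ^ k) • (EuclideanSpace.proj α : E n →L[ℝ] ℝ)) x := by
  exact ((EuclideanSpace.proj α : E n →L[ℝ] ℝ).hasFDerivAt).mul (hasFDerivAt_ck k hk hx)

lemma hasFDerivAt_F (m : ℕ) (hm : 1 ≤ m) (p q : Fin n) {x : E n} (hx : x ≠ 0) :
    HasFDerivAt (fun y : E n => y p * y q * ((‖y‖ ^ 2)⁻¹) ^ m)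
      ((x p * x q) • ((-(2 * (m : ℝ)) * ((‖x‖ ^ 2)⁻¹) ^ (m + 1)) • innerSL ℝ x)
        + (((‖x‖ ^ 2)⁻¹) ^ m) •
          (x p • (EuclideanSpace.proj q : E n →L[ℝ] ℝ)
            + x q • (EuclideanSpace.proj p : E n →L[ℝ] ℝ))) x := by
  exact (((EuclideanSpace.proj p : E n →L[ℝ] ℝ).hasFDerivAt).mul
    ((EuclideanSpace.proj q : E n →L[ℝ] ℝ).hasFDerivAt)).mul (hasFDerivAt_ck m hm hx)

lemma pd_h (A : ℝ) (k : ℕ) (hk : 1 ≤ k) (α i : Fin n) {y : E n} (hy : y ≠ 0) :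
    pd (fun z : E n => A * (z α * ((‖z‖ ^ 2)⁻¹) ^ k)) i y
      = (A * (if α = i then 1 else 0)) * ((‖y‖ ^ 2)⁻¹) ^ k
        - (A * (2 * k)) * (y α * y i * ((‖y‖ ^ 2)⁻¹) ^ (k + 1)) := by
  have h := (hasFDerivAt_h k hk α hy).const_mul A
  rw [pd, h.fderiv]
  simp only [ContinuousLinearMap.smul_apply, ContinuousLinearMap.add_apply,
    innerSL_apply_apply, EuclideanSpace.inner_single_right, map_one, smul_eq_mul,
    EuclideanSpace.single_apply, PiLp.proj_apply, starRingEnd_apply, star_trivial]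
  split_ifs <;> ring

lemma pd_congr_on {f g : E n → ℝ} {s : Set (E n)} (hs : IsOpen s)
    (h : ∀ y ∈ s, f y = g y) {x : E n} (hx : x ∈ s) (i : Fin n) :
    pd f i x = pd g i x := by
  unfold pd
  rw [Filter.EventuallyEq.fderiv_eq (Filter.eventuallyEq_of_mem (hs.mem_nhds hx) h)]

lemma lap_congr_on {f g : E n → ℝ} {s : Set (E n)} (hs : IsOpen s)
    (h : ∀ y ∈ s, f y = g y) {x : E n} (hx : x ∈ s) :
    lap f x = lap g x := by
  unfold lap
  refine Finset.sum_congr rfl fun i _ => ?_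
  exact pd_congr_on hs (fun y hy => pd_congr_on hs h hy i) hx i

lemma sum_sq_eq (x : E n) : ∑ i, x i ^ 2 = ‖x‖ ^ 2 := by
  rw [EuclideanSpace.norm_eq, Real.sq_sqrt (by positivity)]
  simp [sq_abs]

lemma pd_w (B C : ℝ) (k : ℕ) (hk : 1 ≤ k) (α i : Fin n) {x : E n} (hx : x ≠ 0) :
    pd (fun z : E n => B * ((‖z‖ ^ 2)⁻¹) ^ k - C * (z α * z i * ((‖z‖ ^ 2)⁻¹) ^ (k + 1))) i x
      = B * (-(2 * (k : ℝ)) * ((‖x‖ ^ 2)⁻¹) ^ (k + 1) * x i)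
        - C * ((x α * x i) * (-(2 * ((k : ℝ) + 1)) * ((‖x‖ ^ 2)⁻¹) ^ (k + 2) * x i)
            + ((‖x‖ ^ 2)⁻¹) ^ (k + 1) * (x α + x i * (if α = i then 1 else 0))) := by
  have h := ((hasFDerivAt_ck k hk hx).const_mul B).sub
    ((hasFDerivAt_F (k + 1) (by omega) α i hx).const_mul C)
  rw [pd, (show HasFDerivAt (fun z : E n => B * ((‖z‖ ^ 2)⁻¹) ^ k
    - C * (z α * z i * ((‖z‖ ^ 2)⁻¹) ^ (k + 1))) _ x from h).fderiv]
  simp only [ContinuousLinearMap.smul_apply, ContinuousLinearMap.add_apply,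
    ContinuousLinearMap.sub_apply, innerSL_apply_apply, EuclideanSpace.inner_single_right,
    map_one, smul_eq_mul, EuclideanSpace.single_apply, PiLp.proj_apply,
    starRingEnd_apply, star_trivial]
  split_ifs <;> push_cast <;> ring_nf

lemma lap_h (A : ℝ) (k : ℕ) (hk : 1 ≤ k) (α : Fin n) {x : E n} (hx : x ≠ 0) :
    lap (fun y : E n => A * (y α * ((‖y‖ ^ 2)⁻¹) ^ k)) x
      = (A * (2 * k) * (2 * k - (n : ℝ))) * (x α * ((‖x‖ ^ 2)⁻¹) ^ (k + 1)) := by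
  have hN0 := normSq_ne_zero hx
  have hterm : ∀ i : Fin n,
      pd (pd (fun y : E n => A * (y α * ((‖y‖ ^ 2)⁻¹) ^ k)) i) i x
        = (if α = i then (-(4 * (k : ℝ)) * A * x α * ((‖x‖ ^ 2)⁻¹) ^ (k + 1)) else 0)
          + (4 * (k : ℝ) * ((k : ℝ) + 1) * A * x α * ((‖x‖ ^ 2)⁻¹) ^ (k + 2)) * (x i) ^ 2
          - 2 * (k : ℝ) * A * x α * ((‖x‖ ^ 2)⁻¹) ^ (k + 1) := by
    intro i
    have hcong : pd (pd (fun y : E n => A * (y α * ((‖y‖ ^ 2)⁻¹) ^ k)) i) i x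
        = pd (fun z : E n => (A * (if α = i then 1 else 0)) * ((‖z‖ ^ 2)⁻¹) ^ k
            - (A * (2 * (k : ℝ))) * (z α * z i * ((‖z‖ ^ 2)⁻¹) ^ (k + 1))) i x := by
      refine pd_congr_on isOpen_ne (fun y hy => ?_) hx i
      exact pd_h A k hk α i hy
    rw [hcong, pd_w _ _ k hk α i hx]
    split_ifs with h
    · subst h; ring
    · ring
  have hlap : lap (fun y : E n => A * (y α * ((‖y‖ ^ 2)⁻¹) ^ k)) x
      = ∑ i : Fin n, ((if α = i then (-(4 * (k : ℝ)) * A * x α * ((‖x‖ ^ 2)⁻¹) ^ (k + 1)) else 0)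
          + (4 * (k : ℝ) * ((k : ℝ) + 1) * A * x α * ((‖x‖ ^ 2)⁻¹) ^ (k + 2)) * (x i) ^ 2
          - 2 * (k : ℝ) * A * x α * ((‖x‖ ^ 2)⁻¹) ^ (k + 1)) :=
    Finset.sum_congr rfl fun i _ => hterm i
  rw [hlap]
  rw [Finset.sum_sub_distrib, Finset.sum_add_distrib, Finset.sum_ite_eq, ← Finset.mul_sum,
    sum_sq_eq, Finset.sum_const, Finset.card_univ, Fintype.card_fin, nsmul_eq_mul]
  have hcN : ((‖x‖ ^ 2)⁻¹) ^ (k + 2) * ‖x‖ ^ 2 = ((‖x‖ ^ 2)⁻¹) ^ (k + 1) := by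
    rw [pow_succ, mul_assoc, inv_mul_cancel₀ hN0, mul_one]
  rw [show 4 * (k : ℝ) * ((k : ℝ) + 1) * A * x α * ((‖x‖ ^ 2)⁻¹) ^ (k + 2) * ‖x‖ ^ 2
      = 4 * (k : ℝ) * ((k : ℝ) + 1) * A * x α * (((‖x‖ ^ 2)⁻¹) ^ (k + 2) * ‖x‖ ^ 2) from by ring,
    hcN]
  simp only [Finset.mem_univ, if_true]
  ring

end Aux

/-- The componentwise bilaplacian of the inversion `φ(x) = x/|x|²` on `ℝⁿ∖{0}` is
`Δ²φ(x) = 8(n−2)(n−4)x/|x|⁶`; consequently, for `n ≥ 3` the inversion is a biharmonic map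
if and only if `n = 4`. -/
theorem bilap_inversion (n : ℕ) (hn : 2 ≤ n) :
    (∀ x : E n, x ≠ 0 → ∀ α : Fin n,
      lap (lap (fun y : E n => ((‖y‖ ^ 2)⁻¹ • y) α)) x
        = 8 * ((n : ℝ) - 2) * ((n : ℝ) - 4) * x α / ‖x‖ ^ 6) ∧
    (3 ≤ n →
      ((∀ x : E n, x ≠ 0 → ∀ α : Fin n,
          lap (lap (fun y : E n => ((‖y‖ ^ 2)⁻¹ • y) α)) x = 0) ↔ n = 4)) := by
  have main : ∀ x : E n, x ≠ 0 → ∀ α : Fin n,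
      lap (lap (fun y : E n => ((‖y‖ ^ 2)⁻¹ • y) α)) x
        = 8 * ((n : ℝ) - 2) * ((n : ℝ) - 4) * x α / ‖x‖ ^ 6 := by
    intro x hx α
    have hxn : ‖x‖ ≠ 0 := norm_ne_zero_iff.mpr hx
    set A₁ : ℝ := (1 : ℝ) * (2 * ((1 : ℕ) : ℝ)) * (2 * ((1 : ℕ) : ℝ) - (n : ℝ)) with hA₁
    have hfun : (fun y : E n => ((‖y‖ ^ 2)⁻¹ • y) α)
        = fun y : E n => (1 : ℝ) * (y α * ((‖y‖ ^ 2)⁻¹) ^ 1) := by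
      funext y
      show (‖y‖ ^ 2)⁻¹ * y α = _
      ring
    rw [hfun]
    have hcong : lap (lap fun y : E n => (1 : ℝ) * (y α * ((‖y‖ ^ 2)⁻¹) ^ 1)) x
        = lap (fun z : E n => A₁ * (z α * ((‖z‖ ^ 2)⁻¹) ^ 2)) x := by
      refine lap_congr_on isOpen_ne (fun y hy => ?_) hx
      rw [lap_h (1 : ℝ) 1 le_rfl α hy]
    rw [hcong, lap_h A₁ 2 (by norm_num) α hx]
    have h6 : ((‖x‖ ^ 2)⁻¹) ^ (2 + 1) = (‖x‖ ^ 6)⁻¹ := by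
      rw [inv_pow, ← pow_mul]
    rw [h6, hA₁, div_eq_mul_inv]
    push_cast
    ring
  refine ⟨main, fun h3 => ⟨fun hbi => ?_, fun h4 x hx α => ?_⟩⟩
  · have hpos : 0 < n := by omega
    set i0 : Fin n := ⟨0, hpos⟩
    set x₀ : E n := EuclideanSpace.single i0 1 with hx₀def
    have hx0 : x₀ ≠ 0 := by
      intro h
      have h1 : x₀ i0 = 0 := by rw [h]; rfl
      rw [hx₀def, EuclideanSpace.single_apply] at h1
      simp at h1
    have hval := hbi x₀ hx0 i0
    rw [main x₀ hx0 i0] at hval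
    have hnorm : ‖x₀‖ = 1 := by
      rw [hx₀def, EuclideanSpace.norm_single, norm_one]
    have happ : x₀ i0 = 1 := by
      rw [hx₀def, EuclideanSpace.single_apply]; simp
    rw [hnorm, happ] at hval
    norm_num at hval
    rcases hval with h | h
    · have h3' : (3 : ℝ) ≤ (n : ℝ) := by exact_mod_cast h3
      linarith
    · have : (n : ℝ) = 4 := by linarith
      exact_mod_cast this
  · have h40 : ((n : ℝ) - 4) = 0 := by rw [h4]; norm_num
    rw [main x hx α, h40]
    simp

end
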